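/- In a weighted tree, for fixed nodes s and t and any target profit p, the minimum-length walk from s to t visiting nodes of total profit at least p equals d(s,t) plus the minimum, over choices of subtrees branching off the direct s–t path, of twice the total edge weight of the chosen subtree portions whose node profits sum (together with the direct path's profit) to at least p. -/

import Mathlib

open scoped Classical

namespace Stmt5Aux

open SimpleGraph

variable {V : Type*}


lemma mem_support_of_mem_edges' {G : SimpleGraph V} {u x z : V} {e : Sym2 V} (W : G.Walk u x)
    (he : e ∈ W.edges) (hv : z ∈ e) : z ∈ W.support := by
  induction e using Sym2.ind with
  | _ a b =>
    rcases Sym2.mem_iff.mp hv with rfl | rfl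
    · exact W.fst_mem_support_of_mem_edges he
    · exact W.snd_mem_support_of_mem_edges he

lemma mem_support_cases {G : SimpleGraph V} {u x z : V} (W : G.Walk u x) (hv : z ∈ W.support) :
    z = u ∨ ∃ e ∈ W.edges, z ∈ e := by
  induction W with
  | nil => simp at hv; exact Or.inl hv
  | @cons a b c h W ih =>
    rw [SimpleGraph.Walk.support_cons, List.mem_cons] at hv
    rcases hv with h0 | hv
    · exact Or.inl h0
    · rcases ih hv with h0 | ⟨e, he, hve⟩
      · exact Or.inr ⟨s(a, b), by simp, by rw [h0]; exact Sym2.mem_mk_right a b⟩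
      · exact Or.inr ⟨e, by simp [he], hve⟩

lemma reach_extend {G : SimpleGraph V} {a b : V} :
    ∀ {y x : V}, G.Walk y x →
      ((G.deleteEdges {s(a, b)}).Reachable a y ∨ (G.deleteEdges {s(a, b)}).Reachable b y) →
      ((G.deleteEdges {s(a, b)}).Reachable a x ∨ (G.deleteEdges {s(a, b)}).Reachable b x) := by
  intro y x W
  induction W with
  | nil => exact id
  | @cons y z x h W ih =>
    intro hy
    by_cases he : s(y, z) = s(a, b)
    · rw [Sym2.eq_iff] at he
      rcases he with ⟨rfl, rfl⟩ | ⟨rfl, rfl⟩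
      · exact ih (Or.inr (Reachable.refl _))
      · exact ih (Or.inl (Reachable.refl _))
    · have hadj : (G.deleteEdges {s(a, b)}).Adj y z := by
        rw [SimpleGraph.deleteEdges_adj]
        exact ⟨h, by simpa using he⟩
      exact ih (hy.imp (fun hr => hr.trans hadj.reachable) (fun hr => hr.trans hadj.reachable))

lemma reach_or_reach {G : SimpleGraph V} (hc : G.Connected) {a b : V} (_ : G.Adj a b) (x : V) :
    (G.deleteEdges {s(a, b)}).Reachable a x ∨ (G.deleteEdges {s(a, b)}).Reachable b x := by
  obtain ⟨W⟩ := hc.preconnected a x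
  exact reach_extend W (Or.inl (Reachable.refl _))

lemma not_reach_bridge {G : SimpleGraph V} (hT : G.IsAcyclic) {a b : V} (hab : G.Adj a b) :
    ¬ (G.deleteEdges {s(a, b)}).Reachable a b := by
  have := (isAcyclic_iff_forall_edge_isBridge.mp hT) (G.mem_edgeSet.mpr hab)
  exact isBridge_iff.mp this

lemma reach_xor {G : SimpleGraph V} (hc : G.Connected) (hT : G.IsAcyclic) {a b : V}
    (hab : G.Adj a b) (x : V) :
    (G.deleteEdges {s(a, b)}).Reachable a x ↔ ¬ (G.deleteEdges {s(a, b)}).Reachable b x := by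
  constructor
  · intro ha hb
    exact not_reach_bridge hT hab (ha.trans hb.symm)
  · intro hb
    rcases reach_or_reach hc hab x with h | h
    · exact h
    · exact absurd h hb

lemma reach_xor' {G : SimpleGraph V} (hc : G.Connected) (hT : G.IsAcyclic) {a b : V}
    (hab : G.Adj a b) (x : V) :
    (G.deleteEdges {s(a, b)}).Reachable b x ↔ ¬ (G.deleteEdges {s(a, b)}).Reachable a x := by
  constructor
  · intro hb ha
    exact not_reach_bridge hT hab (ha.trans hb.symm)
  · intro ha
    rcases reach_or_reach hc hab x with h | h
    · exact absurd h ha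
    · exact h

lemma parity {G : SimpleGraph V} (hc : G.Connected) (hT : G.IsAcyclic) {a b : V}
    (hab : G.Adj a b) {u v : V} (W : G.Walk u v) :
    Even (W.edges.count s(a, b)) ↔ (G.deleteEdges {s(a, b)}).Reachable u v := by
  induction W with
  | nil =>
    simp only [SimpleGraph.Walk.edges_nil, List.count_nil]
    exact iff_of_true Even.zero (Reachable.refl _)
  | @cons y z x h W ih =>
    rw [SimpleGraph.Walk.edges_cons, List.count_cons]
    simp only [beq_iff_eq]
    by_cases he : s(y, z) = s(a, b)
    · have hyz : (G.deleteEdges {s(a, b)}).Reachable y x ↔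
          ¬ (G.deleteEdges {s(a, b)}).Reachable z x := by
        rw [Sym2.eq_iff] at he
        rcases he with ⟨h1, h2⟩ | ⟨h1, h2⟩
        · subst h1; subst h2; exact reach_xor hc hT hab x
        · subst h1; subst h2; exact reach_xor' hc hT hab x
      simp only [if_pos he]
      rw [Nat.even_add_one, ih, hyz]
    · simp only [if_neg he, add_zero]
      have hadj : (G.deleteEdges {s(a, b)}).Adj y z := by
        rw [SimpleGraph.deleteEdges_adj]
        exact ⟨h, by simpa using he⟩
      rw [ih]
      exact ⟨fun hr => hadj.reachable.trans hr, fun hr => hadj.symm.reachable.trans hr⟩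



lemma mem_support_of_mem_edges'' {G : SimpleGraph V} {u x z : V} {e : Sym2 V} (W : G.Walk u x)
    (he : e ∈ W.edges) (hv : z ∈ e) : z ∈ W.support := by
  induction e using Sym2.ind with
  | _ a b =>
    rcases Sym2.mem_iff.mp hv with rfl | rfl
    · exact W.fst_mem_support_of_mem_edges he
    · exact W.snd_mem_support_of_mem_edges he

/-- In a path, any edge containing the start vertex equals any other such edge. -/
lemma edge_at_start_unique {G : SimpleGraph V} {u v : V} (R : G.Walk u v) :
    R.IsPath → ∀ {e e' : Sym2 V}, e ∈ R.edges → e' ∈ R.edges → u ∈ e → u ∈ e' → e = e' := by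
  induction R with
  | nil => intro _ e e' he; simp at he
  | @cons a b c h W _ =>
    intro hR e e' he he' hu hu'
    rw [SimpleGraph.Walk.edges_cons, List.mem_cons] at he he'
    have hnot : ∀ {g : Sym2 V}, g ∈ W.edges → a ∈ g → False := by
      intro g hg hag
      have : a ∈ W.support := mem_support_of_mem_edges'' W hg hag
      exact ((SimpleGraph.Walk.cons_isPath_iff h W).mp hR).2 this
    rcases he with rfl | he
    · rcases he' with rfl | he'
      · rfl
      · exact ((hnot he' hu').elim)
    · exact ((hnot he hu).elim)

/-- In a path, any edge containing the end vertex equals any other such edge. -/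
lemma edge_at_end_unique {G : SimpleGraph V} {u v : V} {R : G.Walk u v} (hR : R.IsPath)
    {e e' : Sym2 V} (he : e ∈ R.edges) (he' : e' ∈ R.edges) (hv : v ∈ e) (hv' : v ∈ e') :
    e = e' := by
  have h1 : e ∈ R.reverse.edges := by rw [SimpleGraph.Walk.edges_reverse]; simpa using he
  have h2 : e' ∈ R.reverse.edges := by rw [SimpleGraph.Walk.edges_reverse]; simpa using he'
  exact edge_at_start_unique R.reverse hR.reverse h1 h2 hv hv'

/-- An interior vertex of a path lies on two distinct edges. -/
lemma two_edges_of_interior {G : SimpleGraph V} {u v z : V} (R : G.Walk u v) :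
    R.IsPath → z ∈ R.support → z ≠ u → z ≠ v →
    ∃ e₁ ∈ R.edges, ∃ e₂ ∈ R.edges, e₁ ≠ e₂ ∧ z ∈ e₁ ∧ z ∈ e₂ := by
  induction R with
  | nil => intro _ hx hxu _; simp at hx; exact absurd hx hxu
  | @cons a b c h W ih =>
    intro hR hx hxu hxv
    rw [SimpleGraph.Walk.support_cons, List.mem_cons] at hx
    rcases hx with h0 | hx
    · exact absurd h0 hxu
    · by_cases hzb : z = b
      · cases W with
        | nil => exact absurd (hzb.trans rfl) hxv
        | @cons b' d c' h2 W2 =>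
          subst hzb
          refine ⟨s(a, z), by simp, s(z, d), by simp, ?_, Sym2.mem_mk_right a z,
            Sym2.mem_mk_left z d⟩
          intro hcon
          rw [Sym2.eq_iff] at hcon
          rcases hcon with ⟨h3, h4⟩ | ⟨h3, h4⟩
          · exact h.ne h3
          · -- h3 : a = d
            have hd : d ∈ (SimpleGraph.Walk.cons h2 W2).support := by
              rw [SimpleGraph.Walk.support_cons, List.mem_cons]
              exact Or.inr (W2.start_mem_support)
            have : a ∈ (SimpleGraph.Walk.cons h2 W2).support := by rw [h3]; exact hd
            exact ((SimpleGraph.Walk.cons_isPath_iff h _).mp hR).2 this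
      · have hp : W.IsPath := ((SimpleGraph.Walk.cons_isPath_iff h W).mp hR).1
        obtain ⟨e₁, h1, e₂, h2, hne, hz1, hz2⟩ := ih hp hx hzb hxv
        exact ⟨e₁, by simp [h1], e₂, by simp [h2], hne, hz1, hz2⟩

/-- A walk avoiding an edge gives reachability in the edge-deleted graph. -/
lemma reach_of_avoid {G : SimpleGraph V} {u x : V} (R : G.Walk u x) {e : Sym2 V}
    (h : e ∉ R.edges) : (G.deleteEdges {e}).Reachable u x :=
  ⟨R.toDeleteEdges {e} (by intro f hf; simp only [Set.mem_singleton_iff]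
                           rintro rfl; exact h hf)⟩

/-- Choice of far endpoint of an edge of a tree, relative to root `s`. -/
lemma exists_far {G : SimpleGraph V} (hc : G.Connected) (hT : G.IsAcyclic) {e : Sym2 V}
    (he : e ∈ G.edgeSet) (s : V) :
    ∃ a b : V, e = s(a, b) ∧ G.Adj a b ∧ (G.deleteEdges {e}).Reachable s a ∧
      ¬ (G.deleteEdges {e}).Reachable s b := by
  induction e using Sym2.ind with
  | _ a b =>
    rw [SimpleGraph.mem_edgeSet] at he
    rcases reach_or_reach hc he s with h | h
    · refine ⟨a, b, rfl, he, h.symm, fun hb => ?_⟩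
      exact not_reach_bridge hT he (h.symm.symm.trans hb)
    · refine ⟨b, a, Sym2.eq_swap, he.symm, h.symm, fun ha => ?_⟩
      exact not_reach_bridge hT he (ha.symm.trans h.symm)


noncomputable def farPair (G : SimpleGraph V) (hc : G.Connected) (hT : G.IsAcyclic) (s : V)
    (e : Sym2 V) : V × V :=
  if he : e ∈ G.edgeSet then
    ⟨(exists_far hc hT he s).choose, (exists_far hc hT he s).choose_spec.choose⟩
  else (s, s)

lemma farPair_spec {G : SimpleGraph V} (hc : G.Connected) (hT : G.IsAcyclic) (s : V)
    {e : Sym2 V} (he : e ∈ G.edgeSet) :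
    e = s((farPair G hc hT s e).1, (farPair G hc hT s e).2) ∧
      G.Adj (farPair G hc hT s e).1 (farPair G hc hT s e).2 ∧
      (G.deleteEdges {e}).Reachable s (farPair G hc hT s e).1 ∧
      ¬ (G.deleteEdges {e}).Reachable s (farPair G hc hT s e).2 := by
  unfold farPair
  rw [dif_pos he]
  exact (exists_far hc hT he s).choose_spec.choose_spec


lemma reach_fromEdgeSet_path {G : SimpleGraph V} {s t : V} (P : G.Walk s t) :
    ∀ {y x : V}, (SimpleGraph.fromEdgeSet {e | e ∈ P.edges}).Walk y x →
      y ∈ P.support → x ∈ P.support := by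
  intro y x R
  induction R with
  | nil => exact id
  | @cons y z x h R ih =>
    intro hy
    have hmem : s(y, z) ∈ {e | e ∈ P.edges} ∧ y ≠ z := (SimpleGraph.fromEdgeSet_adj _).mp h
    exact ih (P.snd_mem_support_of_mem_edges hmem.1)

lemma lemA {G : SimpleGraph V} (hG : G.Connected) (hT : G.IsAcyclic)
    {s t : V} (P : G.Walk s t) (hP : P.IsPath) :
    ∀ E' : Finset (Sym2 V), (↑E' ⊆ G.edgeSet \ {e | e ∈ P.edges}) →
      (∀ x : V, (∃ e ∈ E', x ∈ e) →
        (SimpleGraph.fromEdgeSet (↑E' ∪ {e | e ∈ P.edges})).Reachable s x) →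
      ∃ W : G.Walk s t,
        (∀ x : V, (SimpleGraph.fromEdgeSet (↑E' ∪ {e | e ∈ P.edges})).Reachable s x →
          x ∈ W.support) ∧
        ∀ w : Sym2 V → ℝ, (W.edges.map w).sum = (P.edges.map w).sum + 2 * ∑ e ∈ E', w e := by
  intro E'
  induction E' using Finset.strongInduction with
  | _ E' ih =>
  intro hsub hreach
  by_cases hE : E' = ∅
  · subst hE
    refine ⟨P, ?_, ?_⟩
    · intro x hx
      have hrw : ((↑(∅ : Finset (Sym2 V)) ∪ {e | e ∈ P.edges}) : Set (Sym2 V)) =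
          {e | e ∈ P.edges} := by simp
      rw [hrw] at hx
      obtain ⟨R⟩ := hx
      exact reach_fromEdgeSet_path P R P.start_mem_support
    · intro w; simp
  · have hne : E'.Nonempty := Finset.nonempty_iff_ne_empty.mpr hE
    have Q : ∀ x : V, G.Path s x := fun x => (hG.preconnected s x).some.toPath
    have hQu : ∀ (x : V) (R : G.Walk s x), R.IsPath → R = (Q x).1 := by
      intro x R hR
      exact congrArg Subtype.val (hT.path_unique ⟨R, hR⟩ (Q x))
    obtain ⟨estar, hestar, hmax⟩ :=
      E'.exists_max_image (fun e => (Q (farPair G hG hT s e).2).1.length) hne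
    have heG : estar ∈ G.edgeSet := (hsub hestar).1
    have hePnot : estar ∉ P.edges := (hsub hestar).2
    obtain ⟨heq, hadj, hreachA, hnreachB⟩ := farPair_spec hG hT s heG
    set a := (farPair G hG hT s estar).1 with ha_def
    set b := (farPair G hG hT s estar).2 with hb_def
    have hbe : b ∈ estar := by rw [heq]; exact Sym2.mem_mk_right a b
    have hae : a ∈ estar := by rw [heq]; exact Sym2.mem_mk_left a b
    -- b is not on P
    have hbP : b ∉ P.support := by
      intro hb
      refine hnreachB (reach_of_avoid (P.takeUntil b hb) ?_)
      intro hmem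
      exact hePnot (P.edges_takeUntil_subset hb hmem)
    -- S3 : the only edge of the configuration containing b is estar
    have S3 : ∀ e' : Sym2 V, e' ∈ (↑E' ∪ {e | e ∈ P.edges} : Set (Sym2 V)) → b ∈ e' →
        e' = estar := by
      intro e' he' hbe'
      rcases he' with he' | he'
      · by_contra hne'
        have he'E : e' ∈ E' := he'
        have he'G : e' ∈ G.edgeSet := (hsub he').1
        obtain ⟨heq', hadj', hreachA', hnreachB'⟩ := farPair_spec hG hT s he'G
        set a' := (farPair G hG hT s e').1 with ha'_def
        set b' := (farPair G hG hT s e').2 with hb'_def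
        -- estar lies on Q b
        have hQb : estar ∈ (Q b).1.edges := by
          by_contra hav
          exact hnreachB (reach_of_avoid _ hav)
        rcases (by rw [heq'] at hbe'; exact Sym2.mem_iff.mp hbe' : b = a' ∨ b = b') with hba' | hbb'
        · -- b = a', so the far end b' of e' is strictly farther
          have hb'b : b' ≠ b := fun h => hadj'.ne (hba' ▸ h.symm) |>.elim
          have hQ'b : e' ∈ (Q b').1.edges := by
            by_contra hav
            exact hnreachB' (reach_of_avoid _ hav)
          have hbQ' : b ∈ (Q b').1.support :=
            mem_support_of_mem_edges' _ hQ'b hbe'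
          set R' : G.Walk s b' := (Q b').1 with hR'
          have htake : (R'.takeUntil b hbQ').IsPath := (Q b').2.takeUntil hbQ'
          have hlen_take : (R'.takeUntil b hbQ').length = (Q b).1.length := by
            rw [← hQu b _ htake]
          have hsplit : (R'.takeUntil b hbQ').length + (R'.dropUntil b hbQ').length =
              R'.length := by
            rw [← SimpleGraph.Walk.length_append, SimpleGraph.Walk.take_spec]
          have hdrop : (R'.dropUntil b hbQ').length ≠ 0 := by
            intro h0
            exact hb'b (SimpleGraph.Walk.eq_of_length_eq_zero h0).symm
          have hlt : (Q b).1.length < R'.length := by omega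
          have hle : (Q b').1.length ≤ (Q b).1.length := by
            have h5 := hmax e' he'E
            simpa only [← hb'_def, ← hb_def] using h5
          have hlenR : R'.length = (Q b').1.length := by rw [hR']
          omega
        · -- b = b' : both estar and e' end at b on Q b
          have hQ'b : e' ∈ (Q b).1.edges := by
            by_contra hav
            refine hnreachB' ?_
            rw [← hbb']
            exact reach_of_avoid _ hav
          exact hne' (edge_at_end_unique (Q b).2 hQ'b hQb hbe' hbe)
      · exact absurd (mem_support_of_mem_edges' P he' hbe') hbP
    -- b is not s
    have hbs : b ≠ s := by
      intro h0
      exact hnreachB (by rw [h0])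
    set E'' := E'.erase estar with hE''_def
    set Hset : Set (Sym2 V) := (↑E' ∪ {e | e ∈ P.edges}) with hHset
    set Hset' : Set (Sym2 V) := (↑E'' ∪ {e | e ∈ P.edges}) with hHset'
    have hedge_mem : ∀ {f : Sym2 V}, f ∈ (SimpleGraph.fromEdgeSet Hset).edgeSet → f ∈ Hset := by
      intro f hf
      rw [SimpleGraph.edgeSet_fromEdgeSet] at hf
      exact hf.1
    have S45 : ∀ x : V, x ≠ b → (SimpleGraph.fromEdgeSet Hset).Reachable s x →
        (SimpleGraph.fromEdgeSet Hset').Reachable s x := by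
      intro x hxb hr
      obtain ⟨R0⟩ := hr
      set R : (SimpleGraph.fromEdgeSet Hset).Walk s x := R0.toPath.1 with hRdef
      have hRpath : R.IsPath := R0.toPath.2
      by_cases hmem : estar ∈ R.edges
      · exfalso
        have hbR : b ∈ R.support := mem_support_of_mem_edges' R hmem hbe
        obtain ⟨e₁, h1, e₂, h2, hne12, hb1, hb2⟩ :=
          two_edges_of_interior R hRpath hbR hbs (Ne.symm hxb)
        have he1 : e₁ = estar := S3 e₁ (hedge_mem (R.edges_subset_edgeSet h1)) hb1
        have he2 : e₂ = estar := S3 e₂ (hedge_mem (R.edges_subset_edgeSet h2)) hb2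
        exact hne12 (he1.trans he2.symm)
      · refine ⟨R.transfer _ ?_⟩
        intro f hf
        have hfH : f ∈ Hset := hedge_mem (R.edges_subset_edgeSet hf)
        have hfd : ¬ f.IsDiag := by
          have := R.edges_subset_edgeSet hf
          rw [SimpleGraph.edgeSet_fromEdgeSet] at this
          exact this.2
        rw [SimpleGraph.edgeSet_fromEdgeSet]
        refine ⟨?_, hfd⟩
        rcases hfH with hfE | hfP
        · left
          have hfe : f ≠ estar := fun h0 => hmem (h0 ▸ hf)
          exact Finset.mem_coe.mpr (Finset.mem_erase.mpr ⟨hfe, Finset.mem_coe.mp hfE⟩)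
        · exact Or.inr hfP
    have hsub'' : ↑E'' ⊆ G.edgeSet \ {e | e ∈ P.edges} := by
      intro f hf
      exact hsub (Finset.mem_coe.mpr (Finset.mem_of_mem_erase (Finset.mem_coe.mp hf)))
    have hreach'' : ∀ x : V, (∃ e ∈ E'', x ∈ e) →
        (SimpleGraph.fromEdgeSet Hset').Reachable s x := by
      rintro x ⟨e'', he'', hxe⟩
      have hxb : x ≠ b := by
        intro h0
        have : e'' = estar := S3 e'' (Or.inl (Finset.mem_coe.mpr
          (Finset.mem_of_mem_erase he''))) (h0 ▸ hxe)
        exact (Finset.ne_of_mem_erase he'') this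
      exact S45 x hxb (hreach x ⟨e'', Finset.mem_of_mem_erase he'', hxe⟩)
    obtain ⟨W2, hWsup, hWsum⟩ := ih E'' (Finset.erase_ssubset hestar) hsub'' hreach''
    have haH : (SimpleGraph.fromEdgeSet Hset').Reachable s a := by
      refine S45 a hadj.ne ?_
      exact hreach a ⟨estar, hestar, hae⟩
    have haW : a ∈ W2.support := hWsup a haH
    set take := W2.takeUntil a haW with htake_def
    set drop := W2.dropUntil a haW with hdrop_def
    refine ⟨take.append (SimpleGraph.Walk.cons hadj (SimpleGraph.Walk.cons hadj.symm drop)),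
      ?_, ?_⟩
    · intro x hx
      rw [SimpleGraph.Walk.mem_support_append_iff]
      by_cases hxb : x = b
      · right
        rw [SimpleGraph.Walk.support_cons, SimpleGraph.Walk.support_cons, hxb]
        exact List.mem_cons_of_mem _ List.mem_cons_self
      · have hxW2 : x ∈ W2.support := hWsup x (S45 x hxb hx)
        rw [← SimpleGraph.Walk.take_spec W2 haW,
          SimpleGraph.Walk.mem_support_append_iff] at hxW2
        rcases hxW2 with h0 | h0
        · exact Or.inl h0
        · right
          rw [SimpleGraph.Walk.support_cons, SimpleGraph.Walk.support_cons]
          exact List.mem_cons_of_mem _ (List.mem_cons_of_mem _ h0)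
    · intro w
      have hsplit : take.edges ++ drop.edges = W2.edges := by
        rw [← SimpleGraph.Walk.edges_append, SimpleGraph.Walk.take_spec]
      have hsum2 : ((take.edges ++ drop.edges).map w).sum = (W2.edges.map w).sum := by
        rw [hsplit]
      rw [List.map_append, List.sum_append] at hsum2
      have hba : s(b, a) = estar := by rw [Sym2.eq_swap] at heq; exact heq.symm
      have hab' : s(a, b) = estar := heq.symm
      rw [SimpleGraph.Walk.edges_append, SimpleGraph.Walk.edges_cons,
        SimpleGraph.Walk.edges_cons, List.map_append, List.sum_append, List.map_cons,
        List.map_cons, List.sum_cons, List.sum_cons, hba, hab']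
      have hsumE : ∑ e ∈ E', w e = w estar + ∑ e ∈ E'', w e := by
        rw [hE''_def, Finset.add_sum_erase E' w hestar]
      rw [hWsum w] at hsum2
      have : (take.edges.map w).sum = (P.edges.map w).sum + 2 * ∑ e ∈ E'', w e
          - (drop.edges.map w).sum := by linarith
      rw [this, hsumE]
      ring


lemma lemB {G : SimpleGraph V} (hG : G.Connected) (hT : G.IsAcyclic) {s t : V}
    (P : G.Walk s t) (hP : P.IsPath) (W : G.Walk s t) (w : Sym2 V → ℝ) (hw : ∀ e, 0 ≤ w e) :
    (P.edges.map w).sum + 2 * ∑ e ∈ W.edges.toFinset \ P.edges.toFinset, w e ≤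
      (W.edges.map w).sum := by
  have hadj : ∀ {e : Sym2 V}, e ∈ G.edgeSet → ∃ a b : V, e = s(a, b) ∧ G.Adj a b := by
    intro e he
    induction e using Sym2.ind with
    | _ a b => exact ⟨a, b, rfl, G.mem_edgeSet.mp he⟩
  -- every edge of P appears an odd number of times in W
  have hodd : ∀ e ∈ P.edges, ¬ Even (W.edges.count e) := by
    intro e he
    obtain ⟨a, b, rfl, hab⟩ := hadj (P.edges_subset_edgeSet he)
    have h1 : P.edges.count s(a, b) = 1 := List.count_eq_one_of_mem hP.isTrail.edges_nodup he
    have hno : ¬ (G.deleteEdges {s(a, b)}).Reachable s t := by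
      intro hr
      have := (parity hG hT hab P).mpr hr
      rw [h1] at this
      simp at this
    intro hev
    exact hno ((parity hG hT hab W).mp hev)
  have hcountP : ∀ e ∈ P.edges, 1 ≤ W.edges.count e := by
    intro e he
    by_contra h0
    push_neg at h0
    interval_cases h : W.edges.count e
    · exact hodd e he (h ▸ Even.zero)
  have hcountW : ∀ e ∈ W.edges.toFinset \ P.edges.toFinset, 2 ≤ W.edges.count e := by
    intro e he
    rw [Finset.mem_sdiff, List.mem_toFinset, List.mem_toFinset] at he
    obtain ⟨heW, heP⟩ := he
    obtain ⟨a, b, rfl, hab⟩ := hadj (W.edges_subset_edgeSet heW)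
    have h0 : P.edges.count s(a, b) = 0 := List.count_eq_zero.mpr heP
    have hr : (G.deleteEdges {s(a, b)}).Reachable s t :=
      (parity hG hT hab P).mp (h0 ▸ Even.zero)
    have hev : Even (W.edges.count s(a, b)) := (parity hG hT hab W).mpr hr
    have hpos : 0 < W.edges.count s(a, b) := List.count_pos_iff.mpr heW
    obtain ⟨k, hk⟩ := hev
    omega
  have hAsub : P.edges.toFinset ⊆ W.edges.toFinset := by
    intro e he
    rw [List.mem_toFinset] at he ⊢
    have := hcountP e he
    exact List.count_pos_iff.mp (by omega)
  rw [Finset.sum_list_map_count W.edges w, Finset.sum_list_map_count P.edges w,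
    ← Finset.sum_sdiff hAsub]
  have hPsum : ∑ e ∈ P.edges.toFinset, P.edges.count e • w e =
      ∑ e ∈ P.edges.toFinset, w e := by
    refine Finset.sum_congr rfl fun e he => ?_
    rw [List.count_eq_one_of_mem hP.isTrail.edges_nodup (List.mem_toFinset.mp he), one_smul]
  rw [hPsum]
  have h1 : ∑ e ∈ P.edges.toFinset, w e ≤ ∑ e ∈ P.edges.toFinset, W.edges.count e • w e := by
    refine Finset.sum_le_sum fun e he => ?_
    have hc := hcountP e (List.mem_toFinset.mp he)
    rw [nsmul_eq_mul]
    have := mul_le_mul_of_nonneg_right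
      (by exact_mod_cast hc : (1 : ℝ) ≤ (W.edges.count e : ℝ)) (hw e)
    linarith
  have h2 : 2 * ∑ e ∈ W.edges.toFinset \ P.edges.toFinset, w e ≤
      ∑ e ∈ W.edges.toFinset \ P.edges.toFinset, W.edges.count e • w e := by
    rw [Finset.mul_sum]
    refine Finset.sum_le_sum fun e he => ?_
    have hc := hcountW e he
    rw [nsmul_eq_mul]
    have := mul_le_mul_of_nonneg_right
      (by exact_mod_cast hc : (2 : ℝ) ≤ (W.edges.count e : ℝ)) (hw e)
    linarith
  linarith


end Stmt5Aux

/-- In a weighted tree, for fixed nodes `s`, `t` and any target profit `p`, the minimum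
length of a walk from `s` to `t` collecting profit at least `p` equals `d(s,t)` (the
length of the unique `s`–`t` path `P`) plus the minimum, over edge sets `E'` of subtrees
branching off the direct path (edges not on `P`, forming together with `P` a connected
subgraph reachable from `s`) whose node profits together with the direct path's profit
sum to at least `p`, of twice the total weight of `E'`. -/
theorem stmt5 {V : Type*} [Fintype V] (G : SimpleGraph V)
    (hG : G.Connected) (hT : G.IsAcyclic)
    (w : Sym2 V → ℝ) (hw : ∀ e, 0 ≤ w e) (π : V → ℕ) (s t : V) (p : ℕ)
    (P : G.Walk s t) (hP : P.IsPath)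
    (hex : ∃ W : G.Walk s t, p ≤ ∑ v ∈ W.support.toFinset, π v) :
    sInf {L : ℝ | ∃ W : G.Walk s t,
        p ≤ ∑ v ∈ W.support.toFinset, π v ∧ L = (W.edges.map w).sum} =
      (P.edges.map w).sum +
      sInf {L : ℝ | ∃ E' : Finset (Sym2 V),
        (↑E' ⊆ G.edgeSet \ {e | e ∈ P.edges}) ∧
        (∀ x : V, (∃ e ∈ E', x ∈ e) →
          (SimpleGraph.fromEdgeSet (↑E' ∪ {e | e ∈ P.edges})).Reachable s x) ∧
        p ≤ ∑ v ∈ Finset.univ.filter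
              (fun x => x ∈ P.support ∨ ∃ e ∈ E', x ∈ e), π v ∧
        L = 2 * ∑ e ∈ E', w e} := by
  set S1 := {L : ℝ | ∃ W : G.Walk s t,
      p ≤ ∑ v ∈ W.support.toFinset, π v ∧ L = (W.edges.map w).sum} with hS1
  set S2 := {L : ℝ | ∃ E' : Finset (Sym2 V),
      (↑E' ⊆ G.edgeSet \ {e | e ∈ P.edges}) ∧
      (∀ x : V, (∃ e ∈ E', x ∈ e) →
        (SimpleGraph.fromEdgeSet (↑E' ∪ {e | e ∈ P.edges})).Reachable s x) ∧
      p ≤ ∑ v ∈ Finset.univ.filter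
            (fun x => x ∈ P.support ∨ ∃ e ∈ E', x ∈ e), π v ∧
      L = 2 * ∑ e ∈ E', w e} with hS2
  -- basic bounds
  have hS1lb : ∀ L ∈ S1, (0 : ℝ) ≤ L := by
    rintro L ⟨W, _, rfl⟩
    refine List.sum_nonneg ?_
    intro x hx
    obtain ⟨e, _, rfl⟩ := List.mem_map.mp hx
    exact hw e
  have hS2lb : ∀ L ∈ S2, (0 : ℝ) ≤ L := by
    rintro L ⟨E', _, _, _, rfl⟩
    have : (0 : ℝ) ≤ ∑ e ∈ E', w e := Finset.sum_nonneg fun e _ => hw e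
    linarith
  have hS1bdd : BddBelow S1 := ⟨0, fun L hL => hS1lb L hL⟩
  have hS2bdd : BddBelow S2 := ⟨0, fun L hL => hS2lb L hL⟩
  -- the canonical member of S2 from a walk
  have hmem : ∀ W : G.Walk s t, p ≤ ∑ v ∈ W.support.toFinset, π v →
      (2 * ∑ e ∈ W.edges.toFinset \ P.edges.toFinset, w e) ∈ S2 := by
    intro W hWp
    refine ⟨W.edges.toFinset \ P.edges.toFinset, ?_, ?_, ?_, rfl⟩
    · intro e he
      rw [Finset.coe_sdiff, Set.mem_diff, Finset.mem_coe, Finset.mem_coe,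
        List.mem_toFinset, List.mem_toFinset] at he
      exact ⟨W.edges_subset_edgeSet he.1, he.2⟩
    · rintro x ⟨e, he, hxe⟩
      have heW : e ∈ W.edges := List.mem_toFinset.mp (Finset.mem_sdiff.mp he).1
      have hWedges : ∀ f ∈ W.edges,
          f ∈ (SimpleGraph.fromEdgeSet
            (↑(W.edges.toFinset \ P.edges.toFinset) ∪ {e | e ∈ P.edges})).edgeSet := by
        intro f hf
        rw [SimpleGraph.edgeSet_fromEdgeSet]
        refine ⟨?_, G.not_isDiag_of_mem_edgeSet (W.edges_subset_edgeSet hf)⟩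
        by_cases hfP : f ∈ P.edges
        · exact Or.inr hfP
        · left
          rw [Finset.coe_sdiff, Set.mem_diff, Finset.mem_coe, Finset.mem_coe,
            List.mem_toFinset, List.mem_toFinset]
          exact ⟨hf, hfP⟩
      set WH := W.transfer _ hWedges with hWH
      have hxsup : x ∈ WH.support := by
        rw [SimpleGraph.Walk.support_transfer]
        exact Stmt5Aux.mem_support_of_mem_edges' W heW hxe
      exact ⟨WH.takeUntil x hxsup⟩
    · refine le_trans hWp (Finset.sum_le_sum_of_subset ?_)
      intro v hv
      rw [List.mem_toFinset] at hv
      rw [Finset.mem_filter]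
      refine ⟨Finset.mem_univ v, ?_⟩
      rcases Stmt5Aux.mem_support_cases W hv with rfl | ⟨e, he, hve⟩
      · exact Or.inl P.start_mem_support
      · by_cases heP : e ∈ P.edges
        · exact Or.inl (Stmt5Aux.mem_support_of_mem_edges' P heP hve)
        · refine Or.inr ⟨e, ?_, hve⟩
          rw [Finset.mem_sdiff, List.mem_toFinset, List.mem_toFinset]
          exact ⟨he, heP⟩
  obtain ⟨W0, hW0⟩ := hex
  have hS1ne : S1.Nonempty := ⟨_, W0, hW0, rfl⟩
  have hS2ne : S2.Nonempty := ⟨_, hmem W0 hW0⟩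
  refine le_antisymm ?_ ?_
  · -- sInf S1 ≤ P + sInf S2
    have key : ∀ L ∈ S2, sInf S1 ≤ (P.edges.map w).sum + L := by
      rintro L ⟨E', hEsub, hEreach, hEprof, rfl⟩
      obtain ⟨W, hWsup, hWsum⟩ := Stmt5Aux.lemA hG hT P hP E' hEsub hEreach
      have hfilter : Finset.univ.filter (fun x => x ∈ P.support ∨ ∃ e ∈ E', x ∈ e) ⊆
          W.support.toFinset := by
        intro x hx
        rw [Finset.mem_filter] at hx
        rw [List.mem_toFinset]
        rcases hx.2 with hxP | hxE
        · -- P's support is reachable in the configuration graph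
          have hPedges : ∀ f ∈ P.edges,
              f ∈ (SimpleGraph.fromEdgeSet (↑E' ∪ {e | e ∈ P.edges})).edgeSet := by
            intro f hf
            rw [SimpleGraph.edgeSet_fromEdgeSet]
            exact ⟨Or.inr hf, G.not_isDiag_of_mem_edgeSet (P.edges_subset_edgeSet hf)⟩
          set PH := P.transfer _ hPedges with hPH
          have hxsup : x ∈ PH.support := by
            rw [SimpleGraph.Walk.support_transfer]
            exact hxP
          exact hWsup x ⟨PH.takeUntil x hxsup⟩
        · exact hWsup x (hEreach x hxE)
      have hprofW : p ≤ ∑ v ∈ W.support.toFinset, π v :=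
        le_trans hEprof (Finset.sum_le_sum_of_subset hfilter)
      have : (W.edges.map w).sum ∈ S1 := ⟨W, hprofW, rfl⟩
      have h5 := csInf_le hS1bdd this
      rw [hWsum w] at h5
      exact h5
    have h6 : sInf S1 - (P.edges.map w).sum ≤ sInf S2 := by
      refine le_csInf hS2ne fun L hL => ?_
      have := key L hL
      linarith
    linarith
  · -- P + sInf S2 ≤ sInf S1
    refine le_csInf hS1ne ?_
    rintro L ⟨W, hWp, rfl⟩
    have h7 : sInf S2 ≤ 2 * ∑ e ∈ W.edges.toFinset \ P.edges.toFinset, w e :=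
      csInf_le hS2bdd (hmem W hWp)
    have h8 := Stmt5Aux.lemB hG hT P hP W w hw
    linarith
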